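/- Define ρ_ℓ(T)² := η_ℓ(T)² ζ_ℓ² + η_ℓ² ζ_ℓ(T)² for local indicators η_ℓ, ζ_ℓ on a finite set T_ℓ with global values η_ℓ, ζ_ℓ. If M_ℓ ⊆ T_ℓ satisfies max_{T∈T_ℓ\M_ℓ} ρ_ℓ(T) ≤ M(ρ_ℓ(M_ℓ)) for a quasi-monotone M, and sup(η_ℓ + ζ_ℓ) ≤ C_est, then [max_{T∈T_ℓ\M_ℓ} η_ℓ(T)]·[max_{T∈T_ℓ\M_ℓ} ζ_ℓ(T)] ≤ C_mon M(C_est (η_ℓ(M_ℓ)² + ζ_ℓ(M_ℓ)²)^{1/2}). -/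
import Mathlib


/-- "First combine, then mark": with the weighted indicator
`ρ(T)² := η(T)² ζ² + η² ζ(T)²`, if `M` satisfies the general marking criterion for `ρ`
with a quasi-monotone `Mfun`, and the global estimators are bounded by `C_est`, then the
abstract marking criterion holds with
`V(x,y) = C_mon Mfun(C_est (x² + y²)^{1/2})`. -/
theorem stmt_7 {α : Type*} [DecidableEq α] (Tfin Mset : Finset α) (η ζ : α → ℝ)
    (Mfun : ℝ → ℝ) (C_est C_mon : ℝ)
    (hη : ∀ t, 0 ≤ η t) (hζ : ∀ t, 0 ≤ ζ t)
    (hMT : Mset ⊆ Tfin)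
    (hbound : Real.sqrt (∑ t ∈ Tfin, η t ^ 2) + Real.sqrt (∑ t ∈ Tfin, ζ t ^ 2) ≤ C_est)
    (hmono : ∀ s t : ℝ, 0 ≤ s → s ≤ t → Mfun s ≤ C_mon * Mfun t)
    (hMfun : ∀ s, 0 ≤ Mfun s) (hCmon : 0 < C_mon)
    (hmark : ∀ t ∈ Tfin \ Mset,
      Real.sqrt (η t ^ 2 * (∑ s ∈ Tfin, ζ s ^ 2) + (∑ s ∈ Tfin, η s ^ 2) * ζ t ^ 2) ≤
        Mfun (Real.sqrt (∑ s ∈ Mset,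
          (η s ^ 2 * (∑ r ∈ Tfin, ζ r ^ 2) + (∑ r ∈ Tfin, η r ^ 2) * ζ s ^ 2)))) :
    ∀ t ∈ Tfin \ Mset, ∀ t' ∈ Tfin \ Mset,
      η t * ζ t' ≤ C_mon *
        Mfun (C_est * Real.sqrt ((∑ s ∈ Mset, η s ^ 2) + (∑ s ∈ Mset, ζ s ^ 2))) := by
  intro t ht t' ht'
  set A := ∑ s ∈ Tfin, η s ^ 2 with hAdef
  set B := ∑ s ∈ Tfin, ζ s ^ 2 with hBdef
  have hA : 0 ≤ A := Finset.sum_nonneg fun _ _ => sq_nonneg _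
  have hB : 0 ≤ B := Finset.sum_nonneg fun _ _ => sq_nonneg _
  have hsA : 0 ≤ Real.sqrt A := Real.sqrt_nonneg _
  have hsB : 0 ≤ Real.sqrt B := Real.sqrt_nonneg _
  have hC : 0 ≤ C_est := le_trans (by positivity) hbound
  have hAC : A ≤ C_est ^ 2 := by
    have h1 : Real.sqrt A ≤ C_est := by linarith
    calc A = Real.sqrt A ^ 2 := (Real.sq_sqrt hA).symm
    _ ≤ C_est ^ 2 := by nlinarith
  have hBC : B ≤ C_est ^ 2 := by
    have h1 : Real.sqrt B ≤ C_est := by linarith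
    calc B = Real.sqrt B ^ 2 := (Real.sq_sqrt hB).symm
    _ ≤ C_est ^ 2 := by nlinarith
  -- Step 1: η t * ζ t' ≤ ρ t
  have ht'T : t' ∈ Tfin := (Finset.mem_sdiff.mp ht').1
  have hζB : ζ t' ^ 2 ≤ B :=
    Finset.single_le_sum (fun s _ => sq_nonneg (ζ s)) ht'T
  have step1 : η t * ζ t' ≤ Real.sqrt (η t ^ 2 * B + A * ζ t ^ 2) := by
    have h1 : η t * ζ t' ≤ η t * Real.sqrt B := by
      have : ζ t' ≤ Real.sqrt B := by
        rw [show ζ t' = Real.sqrt (ζ t' ^ 2) by rw [Real.sqrt_sq (hζ t')]]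
        exact Real.sqrt_le_sqrt hζB
      exact mul_le_mul_of_nonneg_left this (hη t)
    have h2 : η t * Real.sqrt B = Real.sqrt (η t ^ 2 * B) := by
      rw [Real.sqrt_mul (sq_nonneg _), Real.sqrt_sq (hη t)]
    have h3 : Real.sqrt (η t ^ 2 * B) ≤ Real.sqrt (η t ^ 2 * B + A * ζ t ^ 2) := by
      apply Real.sqrt_le_sqrt; nlinarith [sq_nonneg (ζ t), mul_nonneg hA (sq_nonneg (ζ t))]
    linarith
  -- Step 2: marking
  have step2 := hmark t ht
  -- Step 3: quasi-monotonicity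
  have hS : 0 ≤ (∑ s ∈ Mset, η s ^ 2) + (∑ s ∈ Mset, ζ s ^ 2) := by positivity
  have hρM : Real.sqrt (∑ s ∈ Mset, (η s ^ 2 * B + A * ζ s ^ 2)) ≤
      C_est * Real.sqrt ((∑ s ∈ Mset, η s ^ 2) + (∑ s ∈ Mset, ζ s ^ 2)) := by
    have hsum : (∑ s ∈ Mset, (η s ^ 2 * B + A * ζ s ^ 2)) ≤
        C_est ^ 2 * ((∑ s ∈ Mset, η s ^ 2) + (∑ s ∈ Mset, ζ s ^ 2)) := by
      rw [mul_add, Finset.mul_sum, Finset.mul_sum, ← Finset.sum_add_distrib]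
      apply Finset.sum_le_sum
      intro s _
      nlinarith [sq_nonneg (η s), sq_nonneg (ζ s)]
    calc Real.sqrt (∑ s ∈ Mset, (η s ^ 2 * B + A * ζ s ^ 2))
        ≤ Real.sqrt (C_est ^ 2 * ((∑ s ∈ Mset, η s ^ 2) + (∑ s ∈ Mset, ζ s ^ 2))) :=
          Real.sqrt_le_sqrt hsum
      _ = C_est * Real.sqrt ((∑ s ∈ Mset, η s ^ 2) + (∑ s ∈ Mset, ζ s ^ 2)) := by
          rw [Real.sqrt_mul (sq_nonneg _), Real.sqrt_sq hC]
  have step3 := hmono _ _ (Real.sqrt_nonneg _) hρM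
  linarith
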